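/- On ℝ³ \ {0}, the matrix field M_{ij}(x) := (1/(16π|x|)) ( x_i x_j / |x|² + 3 δ_{ij} ) satisfies Δ M_{ki}(x) + ∑_j ∂_i ∂_j M_{jk}(x) = 0 for all i,k ∈ {1,2,3}. -/

import Mathlib

open MeasureTheory Filter
open scoped BigOperators Topology RealInnerProductSpace

noncomputable section

abbrev E3 : Type := EuclideanSpace ℝ (Fin 3)

/-- Partial derivative in the `i`-th coordinate direction. -/
noncomputable def pd (i : Fin 3) (f : E3 → ℝ) (x : E3) : ℝ :=
  fderiv ℝ f x (EuclideanSpace.single i 1)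

/-- Euclidean Laplacian on `ℝ³`. -/
noncomputable def lap (f : E3 → ℝ) (x : E3) : ℝ :=
  ∑ i : Fin 3, pd i (pd i f) x

/-- The matrix field `M_{ij}(x) = (1/(16π|x|)) ( x_i x_j/|x|² + 3δ_{ij} )`. -/
noncomputable def Mmat (i j : Fin 3) (x : E3) : ℝ :=
  (1 / (16 * Real.pi * ‖x‖)) * (x i * x j / ‖x‖ ^ 2 + 3 * (if i = j then (1 : ℝ) else 0))

namespace Stmt1Aux

noncomputable def Pr (l : Fin 3) : E3 →L[ℝ] ℝ := EuclideanSpace.proj l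

lemma hasFDerivAt_coord (l : Fin 3) (x : E3) : HasFDerivAt (fun y : E3 => y l) (Pr l) x :=
  (Pr l).hasFDerivAt

lemma Pr_single (t m : Fin 3) : Pr t (EuclideanSpace.single m 1) = if t = m then 1 else 0 := by
  simp [Pr, EuclideanSpace.single_apply]

noncomputable def n (x : E3) : ℝ := ∑ l : Fin 3, x l * x l

noncomputable def L (x : E3) : E3 →L[ℝ] ℝ := ∑ l : Fin 3, (2 * x l) • Pr l

lemma hasFDerivAt_n (x : E3) : HasFDerivAt n (L x) x := by
  have h : ∀ l : Fin 3, HasFDerivAt (fun y : E3 => y l * y l) ((2 * x l) • Pr l) x := by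
    intro l
    have := (hasFDerivAt_coord l x).fun_mul (hasFDerivAt_coord l x)
    rw [two_mul, add_smul]
    exact this
  exact HasFDerivAt.fun_sum (fun l _ => h l)

lemma L_single (x : E3) (m : Fin 3) : L x (EuclideanSpace.single m 1) = 2 * x m := by
  simp [L, Pr_single, mul_ite]

lemma n_eq_norm_sq (x : E3) : n x = ‖x‖ ^ 2 := by
  rw [EuclideanSpace.norm_eq, Real.sq_sqrt (by positivity)]
  simp [n, Real.norm_eq_abs, sq_abs, sq]

lemma n_pos {x : E3} (hx : x ≠ 0) : 0 < n x := by
  rw [n_eq_norm_sq]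
  have : ‖x‖ ≠ 0 := norm_ne_zero_iff.mpr hx
  positivity

noncomputable def q (a : ℝ) (x : E3) : ℝ := n x ^ a

lemma hasFDerivAt_q (a a' : ℝ) (h : a - 1 = a') {x : E3} (hx : x ≠ 0) :
    HasFDerivAt (q a) ((a * q a' x) • L x) x := by
  subst h
  exact (Real.hasDerivAt_rpow_const (x := n x) (p := a)
    (Or.inl (n_pos hx).ne')).comp_hasFDerivAt x (hasFDerivAt_n x)

lemma pd_eq {f : E3 → ℝ} {f' : E3 →L[ℝ] ℝ} {x : E3} (hf : HasFDerivAt f f' x) (m : Fin 3) :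
    pd m f x = f' (EuclideanSpace.single m 1) := by
  rw [pd, hf.fderiv]

lemma pd_congr {f g : E3 → ℝ} (h : ∀ y : E3, y ≠ 0 → f y = g y) {x : E3} (hx : x ≠ 0) (m : Fin 3) :
    pd m f x = pd m g x := by
  have hev : f =ᶠ[nhds x] g := by
    filter_upwards [isOpen_compl_singleton.mem_nhds hx] with y hy using h y hy
  rw [pd, pd, hev.fderiv_eq]

lemma Mmat_eq (j k : Fin 3) {y : E3} (hy : y ≠ 0) :
    Mmat j k y = (1/(16*Real.pi)) *
      (y j * y k * q (-(3/2)) y + 3 * (if j = k then (1:ℝ) else 0) * q (-(1/2)) y) := by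
  have hN := n_pos hy
  have hnorm : ‖y‖ = n y ^ ((1:ℝ)/2) := by
    rw [EuclideanSpace.norm_eq, Real.sqrt_eq_rpow]
    congr 1
    simp [n, Real.norm_eq_abs, sq_abs, sq]
  have hhalf : (0:ℝ) < n y ^ ((1:ℝ)/2) := Real.rpow_pos_of_pos hN _
  have hsq : ‖y‖ ^ 2 = n y := (n_eq_norm_sq y).symm
  rw [Mmat, hsq, hnorm]
  have e1 : q (-(3/2)) y = (n y ^ ((1:ℝ)/2) * n y)⁻¹ := by
    rw [q, show (-(3/2) : ℝ) = -(1/2 + 1) by norm_num, Real.rpow_neg hN.le,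
      Real.rpow_add hN, Real.rpow_one]
  have e2 : q (-(1/2)) y = (n y ^ ((1:ℝ)/2))⁻¹ := by
    rw [q, show (-(1/2) : ℝ) = -(1/2) by norm_num, Real.rpow_neg hN.le]
  have hsq2 : (n y ^ ((1:ℝ)/2)) ^ 2 = n y := by
    rw [← Real.rpow_natCast (n y ^ ((1:ℝ)/2)) 2, ← Real.rpow_mul hN.le]
    norm_num
  rw [e1, e2]
  rcases eq_or_ne j k with h | h
  · simp only [h, if_true]
    field_simp
    try (rw [← hsq2]; try ring)
  · simp only [h, if_false]
    field_simp

lemma pd_Mmat (j k m : Fin 3) {x : E3} (hx : x ≠ 0) :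
    pd m (Mmat j k) x = (1/(16*Real.pi)) * (
      (if j = m then 1 else 0) * (x k * q (-(3/2)) x)
    + (if k = m then 1 else 0) * (x j * q (-(3/2)) x)
    + (-3) * (x j * x k * x m * q (-(5/2)) x)
    + (if j = k then 1 else 0) * ((-3) * (x m * q (-(3/2)) x))) := by
  have hq32 := hasFDerivAt_q (-(3/2)) (-(5/2)) (by norm_num) hx
  have hq12 := hasFDerivAt_q (-(1/2)) (-(3/2)) (by norm_num) hx
  have hjk := (hasFDerivAt_coord j x).fun_mul (hasFDerivAt_coord k x)
  have hA := hjk.fun_mul hq32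
  have hB := hq12.const_mul (3 * (if j = k then (1:ℝ) else 0))
  have hF := (hA.fun_add hB).const_mul (1/(16*Real.pi))
  rw [pd_congr (fun y hy => Mmat_eq j k hy) hx m, pd_eq hF m]
  simp only [ContinuousLinearMap.add_apply, ContinuousLinearMap.smul_apply, smul_eq_mul,
    L_single, Pr_single]
  ring

lemma pd2_Mmat (j k m i : Fin 3) {x : E3} (hx : x ≠ 0) :
    pd i (pd m (Mmat j k)) x = (1/(16*Real.pi)) * (
      (if j = m then 1 else 0) * (if k = i then 1 else 0) * q (-(3/2)) x
    + (if j = m then 1 else 0) * (-3) * x k * x i * q (-(5/2)) x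
    + (if k = m then 1 else 0) * (if j = i then 1 else 0) * q (-(3/2)) x
    + (if k = m then 1 else 0) * (-3) * x j * x i * q (-(5/2)) x
    + (-3) * (if j = i then 1 else 0) * x k * x m * q (-(5/2)) x
    + (-3) * (if k = i then 1 else 0) * x j * x m * q (-(5/2)) x
    + (-3) * (if m = i then 1 else 0) * x j * x k * q (-(5/2)) x
    + 15 * x j * x k * x m * x i * q (-(7/2)) x
    + (if j = k then 1 else 0) * (-3) * (if m = i then 1 else 0) * q (-(3/2)) x
    + (if j = k then 1 else 0) * 9 * x m * x i * q (-(5/2)) x) := by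
  have hq32 := hasFDerivAt_q (-(3/2)) (-(5/2)) (by norm_num) hx
  have hq52 := hasFDerivAt_q (-(5/2)) (-(7/2)) (by norm_num) hx
  have h1 := ((hasFDerivAt_coord k x).fun_mul hq32).const_mul (if j = m then (1:ℝ) else 0)
  have h2 := ((hasFDerivAt_coord j x).fun_mul hq32).const_mul (if k = m then (1:ℝ) else 0)
  have h3 := ((((hasFDerivAt_coord j x).fun_mul (hasFDerivAt_coord k x)).fun_mul
      (hasFDerivAt_coord m x)).fun_mul hq52).const_mul (-3 : ℝ)
  have h4 := (((hasFDerivAt_coord m x).fun_mul hq32).const_mul (-3 : ℝ)).const_mul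
      (if j = k then (1:ℝ) else 0)
  have hF := (((h1.fun_add h2).fun_add h3).fun_add h4).const_mul (1/(16*Real.pi))
  rw [pd_congr (fun y hy => pd_Mmat j k m hy) hx i, pd_eq hF i]
  simp only [ContinuousLinearMap.add_apply, ContinuousLinearMap.smul_apply, smul_eq_mul,
    L_single, Pr_single]
  ring

lemma q_step (a a' : ℝ) (h : a' + 1 = a) {x : E3} (hx : x ≠ 0) :
    q a x = (x 0 * x 0 + x 1 * x 1 + x 2 * x 2) * q a' x := by
  subst h
  rw [q, q, Real.rpow_add (n_pos hx), Real.rpow_one]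
  rw [show n x = x 0 * x 0 + x 1 * x 1 + x 2 * x 2 from by rw [n, Fin.sum_univ_three]]
  ring

end Stmt1Aux

open Stmt1Aux in
set_option maxHeartbeats 1000000 in
/-- on ℝ³ \ {0}, `Δ M_{ki} + ∑_j ∂_i∂_j M_{jk} = 0`. -/
theorem stmt1 (i k : Fin 3) (x : E3) (hx : x ≠ 0) :
    lap (Mmat k i) x + ∑ j : Fin 3, pd i (pd j (Mmat j k)) x = 0 := by
  have h32 := q_step (-(3/2)) (-(5/2)) (by norm_num) hx
  have h52 := q_step (-(5/2)) (-(7/2)) (by norm_num) hx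
  rw [lap, Fin.sum_univ_three, Fin.sum_univ_three,
    pd2_Mmat k i 0 0 hx, pd2_Mmat k i 1 1 hx, pd2_Mmat k i 2 2 hx,
    pd2_Mmat 0 k 0 i hx, pd2_Mmat 1 k 1 i hx, pd2_Mmat 2 k 2 i hx]
  have hi : i = 0 ∨ i = 1 ∨ i = 2 := by omega
  have hk : k = 0 ∨ k = 1 ∨ k = 2 := by omega
  rcases hi with rfl | rfl | rfl <;> rcases hk with rfl | rfl | rfl <;>
    (simp only [Fin.isValue, Fin.reduceEq, reduceIte, one_mul, mul_one, zero_mul, mul_zero,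
       add_zero, zero_add]
     simp only [h32, h52]
     ring)
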